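/- Let hₙ, h : Ω → ℝ be measurable with hₙ ≥ λ > 0 and h ≥ λ a.e., and suppose αₙ := ‖h - hₙ‖_{L^∞(Ω)} → 0. Then for any v ∈ W^{1,∞}₀(Ω) with |∇v| ≤ h a.e., the functions vₙ = (λ/(λ+αₙ)) v satisfy |∇vₙ| ≤ hₙ a.e. and vₙ → v strongly in W^{1,∞}(Ω). -/

import Mathlib

open MeasureTheory Filter Set Topology
open scoped ENNReal NNReal

/-- key approximation lemma. If `hₙ → h` in `L^∞`, `hₙ, h ≥ λ > 0`, and
`|∇v| ≤ h` a.e., then `vₙ = (λ/(λ+αₙ)) v` (`αₙ = ‖h - hₙ‖_∞`) satisfies `|∇vₙ| ≤ hₙ`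
a.e. and `vₙ → v` strongly in `W^{1,∞}`, i.e. both `vₙ → v` and `∇vₙ → ∇v` in `L^∞`.
The function `v` and its gradient `gv` are bounded (`v ∈ W^{1,∞}₀(Ω)`, Ω bounded). -/
theorem stmt1 {α : Type*} [MeasurableSpace α] (μ : Measure α) {N : ℕ}
    (lam : ℝ) (hlam : 0 < lam)
    (h : α → ℝ) (hn : ℕ → α → ℝ)
    (hmeas : Measurable h) (hnmeas : ∀ n, Measurable (hn n))
    (hge : ∀ᵐ x ∂μ, lam ≤ h x) (hnge : ∀ n, ∀ᵐ x ∂μ, lam ≤ hn n x)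
    (a : ℕ → ℝ) (ha : ∀ n, a n = (eLpNorm (fun x => h x - hn n x) ⊤ μ).toReal)
    (hafin : ∀ n, eLpNorm (fun x => h x - hn n x) ⊤ μ ≠ ⊤)
    (ha0 : Filter.Tendsto a Filter.atTop (𝓝 0))
    (v : α → ℝ) (gv : α → EuclideanSpace ℝ (Fin N))
    (hvbd : eLpNorm v ⊤ μ ≠ ⊤) (hgvbd : eLpNorm gv ⊤ μ ≠ ⊤)
    (hv : ∀ᵐ x ∂μ, ‖gv x‖ ≤ h x) :
    (∀ n, ∀ᵐ x ∂μ, ‖(lam / (lam + a n)) • gv x‖ ≤ hn n x) ∧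
    Filter.Tendsto
      (fun n => eLpNorm (fun x => (lam / (lam + a n)) * v x - v x) ⊤ μ
        + eLpNorm (fun x => (lam / (lam + a n)) • gv x - gv x) ⊤ μ)
      Filter.atTop (𝓝 0) := by
  have hanonneg : ∀ n, 0 ≤ a n := fun n => (ha n) ▸ ENNReal.toReal_nonneg
  constructor
  · intro n
    have hdiff : ∀ᵐ x ∂μ, |h x - hn n x| ≤ a n := by
      have := ae_le_eLpNormEssSup (f := fun x => h x - hn n x) (μ := μ)
      filter_upwards [this] with x hx
      rw [ha n]
      have h2 : ((‖h x - hn n x‖₊ : ℝ≥0∞)).toReal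
          ≤ (eLpNorm (fun x => h x - hn n x) ⊤ μ).toReal :=
        ENNReal.toReal_mono (hafin n) (by simpa [eLpNorm_exponent_top, enorm_eq_nnnorm] using hx)
      simpa [Real.norm_eq_abs] using h2
    filter_upwards [hv, hnge n, hdiff] with x hx1 hx2 hx3
    have hpos : 0 < lam + a n := by linarith [hanonneg n]
    rw [norm_smul, Real.norm_eq_abs, abs_of_nonneg (by positivity)]
    rw [div_mul_eq_mul_div, div_le_iff₀ hpos]
    have h1 : h x ≤ hn n x + a n := by cases abs_le.mp hx3; linarith
    nlinarith [hanonneg n]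
  · have hc : Tendsto (fun n => lam / (lam + a n)) atTop (𝓝 1) := by
      have := (tendsto_const_nhds (x := lam) (f := atTop)).div
        ((tendsto_const_nhds (x := lam)).add ha0) (by simpa using hlam.ne')
      simpa [hlam.ne', Pi.div_def] using this
    have hc1 : Tendsto (fun n => (‖lam / (lam + a n) - 1‖₊ : ℝ≥0∞)) atTop (𝓝 0) := by
      have h0 : Tendsto (fun n => lam / (lam + a n) - 1) atTop (𝓝 0) := by
        simpa using hc.sub (tendsto_const_nhds (x := (1:ℝ)))
      rw [← ENNReal.coe_zero]
      exact ENNReal.tendsto_coe.mpr (by simpa using h0.nnnorm)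
    have key : ∀ n,
        eLpNorm (fun x => (lam / (lam + a n)) * v x - v x) ⊤ μ
          + eLpNorm (fun x => (lam / (lam + a n)) • gv x - gv x) ⊤ μ
        = (‖lam / (lam + a n) - 1‖₊ : ℝ≥0∞) * (eLpNorm v ⊤ μ + eLpNorm gv ⊤ μ) := by
      intro n
      have e1 : (fun x => (lam / (lam + a n)) * v x - v x)
          = (lam / (lam + a n) - 1) • v := by
        funext x; simp [sub_mul]
      have e2 : (fun x => (lam / (lam + a n)) • gv x - gv x)
          = (lam / (lam + a n) - 1) • gv := by
        funext x; simp [sub_smul]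
      rw [e1, e2, eLpNorm_const_smul, eLpNorm_const_smul, mul_add, enorm_eq_nnnorm]
    have : Tendsto (fun n => (‖lam / (lam + a n) - 1‖₊ : ℝ≥0∞)
        * (eLpNorm v ⊤ μ + eLpNorm gv ⊤ μ)) atTop (𝓝 0) := by
      have := ENNReal.Tendsto.mul_const hc1
        (Or.inr (ENNReal.add_ne_top.mpr ⟨hvbd, hgvbd⟩))
      simpa using this
    exact this.congr fun n => (key n).symm
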